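/- Let m, n, l ≥ 1, let H₁ ∈ ℂ^{n×m} and H₂ ∈ ℂ^{l×n} be matrices, and let P₁, P₂ > 0. Define γ₁⋆ = sup{ P₁‖H₁s‖² : s ∈ ℂ^m, ‖s‖ = 1 } and γ₂⋆ = sup{ P₂‖H₂w‖² : w ∈ ℂ^n, ‖w‖ = 1 }. Then the supremum of P₁P₂|rᴴH₂WH₁s|² / (P₂‖WᴴH₂ᴴr‖² + 1) over all s ∈ ℂ^m with ‖s‖ = 1, r ∈ ℂ^l with ‖r‖ = 1, and W ∈ ℂ^{n×n} satisfying P₁‖WH₁s‖² + ‖W‖_F² = 1, equals γ₁⋆γ₂⋆ / (1 + γ₁⋆ + γ₂⋆). -/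

import Mathlib

/-- Euclidean norm of a complex vector. -/
noncomputable def cnorm {k : ℕ} (v : Fin k → ℂ) : ℝ :=
  Real.sqrt (∑ i, ‖v i‖ ^ 2)

/-- Squared Frobenius norm of a complex matrix. -/
noncomputable def frobSq {p q : ℕ} (A : Matrix (Fin p) (Fin q) ℂ) : ℝ :=
  ∑ i, ∑ j, ‖A i j‖ ^ 2

lemma cnorm_nonneg {k : ℕ} (v : Fin k → ℂ) : 0 ≤ cnorm v := Real.sqrt_nonneg _

lemma cnorm_sq {k : ℕ} (v : Fin k → ℂ) : cnorm v ^ 2 = ∑ i, ‖v i‖ ^ 2 :=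
  Real.sq_sqrt (by positivity)

lemma cnorm_eq_norm {k : ℕ} (v : Fin k → ℂ) :
    cnorm v = ‖(WithLp.equiv 2 (Fin k → ℂ)).symm v‖ := by
  rw [EuclideanSpace.norm_eq]; rfl

lemma cnorm_eq_zero {k : ℕ} {v : Fin k → ℂ} (h : cnorm v = 0) : v = 0 := by
  rw [cnorm_eq_norm] at h
  have := norm_eq_zero.mp h
  simpa using congrArg (WithLp.equiv 2 (Fin k → ℂ)) this

lemma cnorm_smul {k : ℕ} (z : ℂ) (v : Fin k → ℂ) :
    cnorm (fun i => z * v i) = ‖z‖ * cnorm v := by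
  unfold cnorm
  have h : ∑ i, ‖z * v i‖ ^ 2 = ‖z‖ ^ 2 * ∑ i, ‖v i‖ ^ 2 := by
    rw [Finset.mul_sum]
    exact Finset.sum_congr rfl fun i _ => by rw [norm_mul]; ring
  rw [h, Real.sqrt_mul (by positivity), Real.sqrt_sq (norm_nonneg z)]

lemma dot_self {k : ℕ} (v : Fin k → ℂ) :
    dotProduct (star v) v = ((cnorm v ^ 2 : ℝ) : ℂ) := by
  rw [cnorm_sq]
  unfold dotProduct
  push_cast
  refine Finset.sum_congr rfl fun i _ => ?_
  simp only [Pi.star_apply, Complex.star_def, Complex.conj_mul']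

lemma dot_cs {k : ℕ} (v u : Fin k → ℂ) :
    ‖dotProduct (star v) u‖ ≤ cnorm v * cnorm u := by
  rw [cnorm_eq_norm, cnorm_eq_norm]
  have := norm_inner_le_norm (𝕜 := ℂ) ((WithLp.equiv 2 (Fin k → ℂ)).symm v)
    ((WithLp.equiv 2 (Fin k → ℂ)).symm u)
  rw [dotProduct_comm]; exact this

lemma adjoint_dot {p k : ℕ} (M : Matrix (Fin p) (Fin k) ℂ) (r : Fin p → ℂ) (u : Fin k → ℂ) :
    dotProduct (star r) (M.mulVec u) =
      dotProduct (star (M.conjTranspose.mulVec r)) u := by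
  unfold dotProduct Matrix.mulVec
  simp only [dotProduct, Pi.star_apply, Matrix.conjTranspose_apply, Finset.mul_sum,
    Finset.sum_mul, Complex.star_def, map_sum, map_mul, Complex.conj_conj]
  rw [Finset.sum_comm]
  refine Finset.sum_congr rfl fun j _ => Finset.sum_congr rfl fun i _ => ?_
  ring

lemma frob_conjT {p q : ℕ} (M : Matrix (Fin p) (Fin q) ℂ) :
    frobSq M.conjTranspose = frobSq M := by
  unfold frobSq Matrix.conjTranspose
  rw [Finset.sum_comm]
  simp

lemma mulVec_frob {p k : ℕ} (M : Matrix (Fin p) (Fin k) ℂ) (u : Fin k → ℂ) :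
    cnorm (M.mulVec u) ^ 2 ≤ frobSq M * cnorm u ^ 2 := by
  rw [cnorm_sq, cnorm_sq]
  unfold frobSq
  rw [Finset.sum_mul]
  refine Finset.sum_le_sum fun i _ => ?_
  have h1 : ‖(M.mulVec u) i‖ ≤ ∑ j, ‖M i j‖ * ‖u j‖ := by
    unfold Matrix.mulVec dotProduct
    refine (norm_sum_le _ _).trans ?_
    exact Finset.sum_le_sum fun j _ => by rw [norm_mul]
  have h2 : (∑ j, ‖M i j‖ * ‖u j‖) ^ 2 ≤ (∑ j, ‖M i j‖ ^ 2) * ∑ j, ‖u j‖ ^ 2 :=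
    Finset.sum_mul_sq_le_sq_mul_sq Finset.univ _ _
  calc ‖(M.mulVec u) i‖ ^ 2 ≤ (∑ j, ‖M i j‖ * ‖u j‖) ^ 2 := by
        exact pow_le_pow_left₀ (norm_nonneg _) h1 2
    _ ≤ _ := h2

lemma core_ineq (α β y xv N : ℝ) (hα : 0 ≤ α) (hβ : 0 ≤ β) (hy : 0 ≤ y) (hxv : 0 ≤ xv)
    (hcon : y + β * xv ≤ β) (hN : 0 ≤ N) (h1 : N ≤ α * y) (h2 : N ≤ β * xv) :
    N / (y + 1) ≤ α * β / (1 + α + β) := by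
  rw [div_le_div_iff₀ (by linarith) (by linarith)]
  by_cases hc : y * (1 + α) ≤ β
  · nlinarith [mul_le_mul_of_nonneg_left hc hα, mul_nonneg hα hy]
  · push_neg at hc
    nlinarith [mul_nonneg hβ hxv]

lemma mono_ineq (α β γ₁ γ₂ : ℝ) (hα : 0 ≤ α) (hβ : 0 ≤ β) (h1 : α ≤ γ₁) (h2 : β ≤ γ₂) :
    α * β / (1 + α + β) ≤ γ₁ * γ₂ / (1 + γ₁ + γ₂) := by
  rw [div_le_div_iff₀ (by linarith) (by linarith)]
  have hg1 : 0 ≤ γ₁ := hα.trans h1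
  have hg2 : 0 ≤ γ₂ := hβ.trans h2
  nlinarith [mul_le_mul h1 h2 hβ hg1, mul_le_mul_of_nonneg_left h2 (mul_nonneg hα hg1),
    mul_le_mul_of_nonneg_left h1 (mul_nonneg hβ hg2)]

/-- a unit vector -/
noncomputable def unitVec (k : ℕ) (hk : 1 ≤ k) : Fin k → ℂ :=
  fun i => if i = ⟨0, hk⟩ then 1 else 0

lemma cnorm_unitVec (k : ℕ) (hk : 1 ≤ k) : cnorm (unitVec k hk) = 1 := by
  unfold cnorm unitVec
  rw [show (∑ i, ‖if i = (⟨0, hk⟩ : Fin k) then (1:ℂ) else 0‖ ^ 2) = 1 by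
    rw [Finset.sum_eq_single ⟨0, hk⟩]
    · simp
    · intro b _ hb; simp [hb]
    · simp]
  exact Real.sqrt_one

lemma cnorm_continuous {k : ℕ} : Continuous fun v : Fin k → ℂ => cnorm v := by
  unfold cnorm
  exact Real.continuous_sqrt.comp
    (continuous_finset_sum _ fun i _ => ((continuous_apply i).norm.pow 2))

lemma exists_max {p k : ℕ} (hk : 1 ≤ k) (A : Matrix (Fin p) (Fin k) ℂ) :
    ∃ s : Fin k → ℂ, cnorm s = 1 ∧ ∀ t : Fin k → ℂ, cnorm t = 1 →
      cnorm (A.mulVec t) ≤ cnorm (A.mulVec s) := by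
  have hcomp : IsCompact (Metric.sphere (0 : EuclideanSpace ℂ (Fin k)) 1) :=
    isCompact_sphere _ _
  have hne : (Metric.sphere (0 : EuclideanSpace ℂ (Fin k)) 1).Nonempty := by
    refine ⟨EuclideanSpace.single ⟨0, hk⟩ (1 : ℂ), ?_⟩
    rw [mem_sphere_zero_iff_norm, EuclideanSpace.norm_single]
    simp
  have hmv : Continuous fun v : Fin k → ℂ => A.mulVec v := by
    refine continuous_pi fun i => ?_
    unfold Matrix.mulVec dotProduct
    exact continuous_finset_sum _ fun j _ => continuous_const.mul (continuous_apply j)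
  have hcont : Continuous fun x : EuclideanSpace ℂ (Fin k) =>
      cnorm (A.mulVec (WithLp.equiv 2 (Fin k → ℂ) x)) :=
    cnorm_continuous.comp (hmv.comp (PiLp.continuous_ofLp _ _))
  obtain ⟨x, hx, hmax⟩ := hcomp.exists_isMaxOn hne hcont.continuousOn
  refine ⟨WithLp.equiv 2 _ x, ?_, fun t ht => ?_⟩
  · rw [cnorm_eq_norm]
    simpa using mem_sphere_zero_iff_norm.mp hx
  · have hmem : (WithLp.equiv 2 (Fin k → ℂ)).symm t ∈
        Metric.sphere (0 : EuclideanSpace ℂ (Fin k)) 1 := by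
      rw [mem_sphere_zero_iff_norm, ← cnorm_eq_norm]; exact ht
    simpa using hmax hmem

lemma sSup_attained {p k : ℕ} (hk : 1 ≤ k) (A : Matrix (Fin p) (Fin k) ℂ) (c : ℝ) (hc : 0 < c) :
    ∃ s : Fin k → ℂ, cnorm s = 1 ∧
      IsGreatest {x : ℝ | ∃ t : Fin k → ℂ, cnorm t = 1 ∧ x = c * cnorm (A.mulVec t) ^ 2}
        (c * cnorm (A.mulVec s) ^ 2) := by
  obtain ⟨s, hs, hmax⟩ := exists_max hk A
  refine ⟨s, hs, ⟨s, hs, rfl⟩, ?_⟩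
  rintro x ⟨t, ht, rfl⟩
  exact mul_le_mul_of_nonneg_left (pow_le_pow_left₀ (cnorm_nonneg _) (hmax t ht) 2) hc.le

lemma dot_scaled {k : ℕ} (g : Fin k → ℂ) (z : ℂ) :
    dotProduct (star g) (fun j => z * g j) = z * ((cnorm g ^ 2 : ℝ) : ℂ) := by
  rw [← dot_self g]
  unfold dotProduct
  rw [Finset.mul_sum]
  exact Finset.sum_congr rfl fun j _ => by ring

lemma conjT_le {p k : ℕ} (hk : 1 ≤ k) (A : Matrix (Fin p) (Fin k) ℂ) (c : ℝ) (hc : 0 < c)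
    (r : Fin p → ℂ) (hr : cnorm r = 1) :
    c * cnorm (A.conjTranspose.mulVec r) ^ 2 ≤
      sSup {x : ℝ | ∃ t : Fin k → ℂ, cnorm t = 1 ∧ x = c * cnorm (A.mulVec t) ^ 2} := by
  obtain ⟨s, hs, hG⟩ := sSup_attained hk A c hc
  rw [hG.csSup_eq]
  set g := A.conjTranspose.mulVec r with hgdef
  by_cases h0 : cnorm g = 0
  · rw [h0, show c * (0:ℝ) ^ 2 = 0 by ring]; positivity
  · have hgpos : 0 < cnorm g := (cnorm_nonneg g).lt_of_ne (Ne.symm h0)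
    set w : Fin k → ℂ := fun j => (((cnorm g)⁻¹ : ℝ) : ℂ) * g j with hwdef
    have hw : cnorm w = 1 := by
      rw [hwdef, cnorm_smul, Complex.norm_real, Real.norm_eq_abs,
        abs_of_nonneg (inv_nonneg.mpr hgpos.le)]
      field_simp
    have key : cnorm g ≤ cnorm (A.mulVec w) := by
      have h1 : ‖dotProduct (star r) (A.mulVec w)‖ ≤ cnorm (A.mulVec w) := by
        have h := dot_cs r (A.mulVec w); rwa [hr, one_mul] at h
      have h2 : dotProduct (star r) (A.mulVec w) = ((cnorm g : ℝ) : ℂ) := by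
        rw [adjoint_dot, ← hgdef, hwdef, dot_scaled]
        rw [show ((((cnorm g)⁻¹ : ℝ) : ℂ) * ((cnorm g ^ 2 : ℝ) : ℂ)) =
          (((cnorm g)⁻¹ * cnorm g ^ 2 : ℝ) : ℂ) by push_cast; ring]
        congr 1
        field_simp
      rw [h2, Complex.norm_real, Real.norm_eq_abs, abs_of_nonneg hgpos.le] at h1
      exact h1
    have hle : c * cnorm g ^ 2 ≤ c * cnorm (A.mulVec w) ^ 2 :=
      mul_le_mul_of_nonneg_left (pow_le_pow_left₀ (cnorm_nonneg g) key 2) hc.le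
    exact hle.trans (hG.2 ⟨w, hw, rfl⟩)

set_option maxHeartbeats 2000000 in
/-- The supremum of the two-hop amplify-and-forward relay SNR
`P₁P₂|rᴴH₂WH₁s|² / (P₂‖WᴴH₂ᴴr‖² + 1)` over unit vectors `s`, `r` and relay matrices `W`
subject to the relay power constraint equals `γ₁⋆γ₂⋆ / (1 + γ₁⋆ + γ₂⋆)`. -/
theorem stmt0 (m n l : ℕ) (hm : 1 ≤ m) (hn : 1 ≤ n) (hl : 1 ≤ l)
    (H₁ : Matrix (Fin n) (Fin m) ℂ) (H₂ : Matrix (Fin l) (Fin n) ℂ)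
    (P₁ P₂ : ℝ) (hP₁ : 0 < P₁) (hP₂ : 0 < P₂)
    (γ₁ γ₂ : ℝ)
    (hγ₁ : γ₁ = sSup {x : ℝ | ∃ s : Fin m → ℂ,
        cnorm s = 1 ∧ x = P₁ * cnorm (H₁.mulVec s) ^ 2})
    (hγ₂ : γ₂ = sSup {x : ℝ | ∃ w : Fin n → ℂ,
        cnorm w = 1 ∧ x = P₂ * cnorm (H₂.mulVec w) ^ 2}) :
    sSup {x : ℝ | ∃ (s : Fin m → ℂ) (r : Fin l → ℂ) (W : Matrix (Fin n) (Fin n) ℂ),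
        cnorm s = 1 ∧ cnorm r = 1 ∧
        P₁ * cnorm (W.mulVec (H₁.mulVec s)) ^ 2 + frobSq W = 1 ∧
        x = P₁ * P₂ * ‖dotProduct (star r) (H₂.mulVec (W.mulVec (H₁.mulVec s)))‖ ^ 2 /
            (P₂ * cnorm ((W.conjTranspose).mulVec ((H₂.conjTranspose).mulVec r)) ^ 2 + 1)} =
      γ₁ * γ₂ / (1 + γ₁ + γ₂) := by
  obtain ⟨s₁, hs₁, hG₁⟩ := sSup_attained hm H₁ P₁ hP₁
  obtain ⟨w₂, hw₂, hG₂⟩ := sSup_attained hn H₂ P₂ hP₂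
  have hγ₁' : γ₁ = P₁ * cnorm (H₁.mulVec s₁) ^ 2 := by rw [hγ₁, hG₁.csSup_eq]
  have hγ₂' : γ₂ = P₂ * cnorm (H₂.mulVec w₂) ^ 2 := by rw [hγ₂, hG₂.csSup_eq]
  have hγ₁0 : 0 ≤ γ₁ := by rw [hγ₁']; positivity
  have hγ₂0 : 0 ≤ γ₂ := by rw [hγ₂']; positivity
  refine IsGreatest.csSup_eq ⟨?_, ?_⟩
  · -- membership
    by_cases hpos : 0 < γ₁ ∧ 0 < γ₂
    · obtain ⟨hp1, hp2⟩ := hpos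
      -- build the maximizing receive vector
      set b := H₂.mulVec w₂ with hbdef
      have hbpos : 0 < cnorm b := by
        rcases (cnorm_nonneg b).lt_or_eq with h | h
        · exact h
        · exfalso; rw [hγ₂', ← h] at hp2; norm_num at hp2
      set rv : Fin l → ℂ := fun i => (((cnorm b)⁻¹ : ℝ) : ℂ) * b i with hrvdef
      have hrv : cnorm rv = 1 := by
        rw [hrvdef, cnorm_smul, Complex.norm_real, Real.norm_eq_abs,
          abs_of_nonneg (inv_nonneg.mpr hbpos.le)]
        field_simp
      set g := H₂.conjTranspose.mulVec rv with hgdef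
      have hβ_le : P₂ * cnorm g ^ 2 ≤ γ₂ := by
        rw [hγ₂]; exact conjT_le hn H₂ P₂ hP₂ rv hrv
      have hβ_ge : γ₂ ≤ P₂ * cnorm g ^ 2 := by
        have hdot : dotProduct (star rv) b = ((cnorm b : ℝ) : ℂ) := by
          rw [hrvdef]
          have : star (fun i => (((cnorm b)⁻¹ : ℝ) : ℂ) * b i) =
              fun i => (((cnorm b)⁻¹ : ℝ) : ℂ) * star b i := by
            funext i
            simp [Complex.star_def, map_mul, Complex.conj_ofReal]
          rw [this]
          have h2 : dotProduct (fun i => (((cnorm b)⁻¹ : ℝ) : ℂ) * star b i) b =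
              (((cnorm b)⁻¹ : ℝ) : ℂ) * dotProduct (star b) b := by
            unfold dotProduct
            rw [Finset.mul_sum]
            exact Finset.sum_congr rfl fun i _ => by simp [Pi.star_apply]; ring
          rw [h2, dot_self]
          rw [show ((((cnorm b)⁻¹ : ℝ) : ℂ) * ((cnorm b ^ 2 : ℝ) : ℂ)) =
            (((cnorm b)⁻¹ * cnorm b ^ 2 : ℝ) : ℂ) by push_cast; ring]
          congr 1
          field_simp
        have hkey : cnorm b ≤ cnorm g := by
          have h1 : ‖dotProduct (star rv) (H₂.mulVec w₂)‖ ≤ cnorm g * cnorm w₂ := by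
            rw [adjoint_dot, ← hgdef]; exact dot_cs g w₂
          rw [← hbdef, hdot, Complex.norm_real, Real.norm_eq_abs,
            abs_of_nonneg hbpos.le, hw₂, mul_one] at h1
          exact h1
        rw [hγ₂']
        have := pow_le_pow_left₀ hbpos.le hkey 2
        nlinarith
      have hβ : P₂ * cnorm g ^ 2 = γ₂ := le_antisymm hβ_le hβ_ge
      set a := H₁.mulVec s₁ with hadef
      have hα : P₁ * cnorm a ^ 2 = γ₁ := hγ₁'.symm
      have hapos : 0 < cnorm a := by
        rcases (cnorm_nonneg a).lt_or_eq with h | h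
        · exact h
        · exfalso; rw [← h] at hα; rw [← hα] at hp1; norm_num at hp1
      have hgpos : 0 < cnorm g := by
        rcases (cnorm_nonneg g).lt_or_eq with h | h
        · exact h
        · exfalso; rw [← h] at hβ; rw [← hβ] at hp2; norm_num at hp2
      set κ : ℝ := (Real.sqrt (1 + γ₁))⁻¹ * (cnorm a)⁻¹ * (cnorm g)⁻¹ with hκdef
      have hsq : Real.sqrt (1 + γ₁) ^ 2 = 1 + γ₁ := Real.sq_sqrt (by linarith)
      have hsqpos : 0 < Real.sqrt (1 + γ₁) := Real.sqrt_pos.mpr (by linarith)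
      have hκpos : 0 < κ := by positivity
      have hκ : κ ^ 2 * ((1 + γ₁) * cnorm a ^ 2 * cnorm g ^ 2) = 1 := by
        rw [hκdef]
        field_simp
        nlinarith [hsq]
      clear_value κ
      clear hκdef
      set W : Matrix (Fin n) (Fin n) ℂ :=
        fun i j => (κ : ℂ) * g i * (starRingEnd ℂ) (a j) with hWdef
      have hsuma : ∑ j, (starRingEnd ℂ) (a j) * a j = ((cnorm a ^ 2 : ℝ) : ℂ) := by
        have := dot_self a
        simpa [dotProduct, Pi.star_apply, Complex.star_def] using this
      have hsumg : ∑ i, (starRingEnd ℂ) (g i) * g i = ((cnorm g ^ 2 : ℝ) : ℂ) := by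
        have := dot_self g
        simpa [dotProduct, Pi.star_apply, Complex.star_def] using this
      have hWa : W.mulVec a = fun i => ((κ : ℂ) * ((cnorm a ^ 2 : ℝ) : ℂ)) * g i := by
        funext i
        show ∑ j, ((κ : ℂ) * g i * (starRingEnd ℂ) (a j)) * a j = _
        rw [show ∑ j, ((κ : ℂ) * g i * (starRingEnd ℂ) (a j)) * a j =
            ((κ : ℂ) * g i) * ∑ j, (starRingEnd ℂ) (a j) * a j by
          rw [Finset.mul_sum]; exact Finset.sum_congr rfl fun j _ => by ring]
        rw [hsuma]; ring
      have hcnWa : cnorm (W.mulVec a) = κ * cnorm a ^ 2 * cnorm g := by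
        rw [hWa, cnorm_smul]
        rw [show ((κ : ℂ) * ((cnorm a ^ 2 : ℝ) : ℂ)) = ((κ * cnorm a ^ 2 : ℝ) : ℂ) by
          push_cast; ring]
        rw [Complex.norm_real, Real.norm_eq_abs, abs_of_nonneg (by positivity)]
      have hfrobW : frobSq W = κ ^ 2 * cnorm g ^ 2 * cnorm a ^ 2 := by
        unfold frobSq
        calc ∑ i, ∑ j, ‖W i j‖ ^ 2
            = ∑ i, ∑ j, (κ ^ 2 * ‖g i‖ ^ 2) * ‖a j‖ ^ 2 := by
              refine Finset.sum_congr rfl fun i _ => Finset.sum_congr rfl fun j _ => ?_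
              rw [hWdef]
              simp only [norm_mul, RCLike.norm_conj, Complex.norm_real, Real.norm_eq_abs,
                abs_of_nonneg hκpos.le]
              ring
          _ = (∑ i, κ ^ 2 * ‖g i‖ ^ 2) * ∑ j, ‖a j‖ ^ 2 :=
              (Finset.sum_mul_sum _ _ _ _).symm
          _ = κ ^ 2 * cnorm g ^ 2 * cnorm a ^ 2 := by
              rw [cnorm_sq, cnorm_sq, ← Finset.mul_sum]
      have hWHg : W.conjTranspose.mulVec g = fun j => ((κ : ℂ) * ((cnorm g ^ 2 : ℝ) : ℂ)) * a j := by
        funext j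
        show ∑ i, (starRingEnd ℂ) (W i j) * g i = _
        rw [show ∑ i, (starRingEnd ℂ) (W i j) * g i =
            ((κ : ℂ) * a j) * ∑ i, (starRingEnd ℂ) (g i) * g i by
          rw [Finset.mul_sum]
          refine Finset.sum_congr rfl fun i _ => ?_
          rw [hWdef]
          simp only [map_mul, Complex.conj_conj, Complex.conj_ofReal]
          ring]
        rw [hsumg]; ring
      have hcnWHg : cnorm (W.conjTranspose.mulVec g) = κ * cnorm g ^ 2 * cnorm a := by
        rw [hWHg, cnorm_smul]
        rw [show ((κ : ℂ) * ((cnorm g ^ 2 : ℝ) : ℂ)) = ((κ * cnorm g ^ 2 : ℝ) : ℂ) by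
          push_cast; ring]
        rw [Complex.norm_real, Real.norm_eq_abs, abs_of_nonneg (by positivity)]
      have hdotval : dotProduct (star rv) (H₂.mulVec (W.mulVec a)) =
          (((κ * cnorm a ^ 2 * cnorm g ^ 2 : ℝ)) : ℂ) := by
        rw [adjoint_dot, ← hgdef, hWa, dot_scaled]
        push_cast
        ring
      refine ⟨s₁, rv, W, hs₁, hrv, ?_, ?_⟩
      · -- power constraint
        rw [← hadef, hcnWa, hfrobW]
        linear_combination hκ + (κ ^ 2 * cnorm a ^ 2 * cnorm g ^ 2) * hα
      · -- value
        rw [← hadef, ← hgdef, hdotval, hcnWHg]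
        rw [Complex.norm_real, Real.norm_eq_abs, abs_of_nonneg (by positivity)]
        rw [div_eq_div_iff (show (0:ℝ) < 1 + γ₁ + γ₂ by linarith).ne' (by positivity)]
        linear_combination
          (- P₂ * κ ^ 2 * cnorm a ^ 2 * cnorm g ^ 4 * (1 + γ₁ + γ₂)) * hα +
          (- γ₁ * κ ^ 2 * cnorm a ^ 2 * cnorm g ^ 2 * (1 + γ₁)) * hβ +
          (- γ₁ * γ₂) * hκ
    · -- degenerate case
      have hdeg : γ₁ = 0 ∨ γ₂ = 0 := by
        rcases hγ₁0.lt_or_eq with h1 | h1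
        · rcases hγ₂0.lt_or_eq with h2 | h2
          · exact absurd ⟨h1, h2⟩ hpos
          · exact Or.inr h2.symm
        · exact Or.inl h1.symm
      have hT0 : γ₁ * γ₂ / (1 + γ₁ + γ₂) = 0 := by
        rcases hdeg with h | h <;> rw [h] <;> ring_nf <;> simp
      rw [hT0]
      set sv := unitVec m hm with hsvdef
      set rv := unitVec l hl with hrvdef
      set a := H₁.mulVec sv with hadef
      set i0 : Fin n := ⟨0, hn⟩ with hi0def
      set t : ℝ := (Real.sqrt (P₁ * ‖a i0‖ ^ 2 + 1))⁻¹ with htdef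
      have hDpos : 0 < P₁ * ‖a i0‖ ^ 2 + 1 := by positivity
      have ht2 : t ^ 2 = (P₁ * ‖a i0‖ ^ 2 + 1)⁻¹ := by
        rw [htdef, inv_pow, Real.sq_sqrt hDpos.le]
      have htnn : 0 ≤ t := by rw [htdef]; positivity
      have htc : ‖(t : ℂ)‖ = t := by
        rw [Complex.norm_real, Real.norm_eq_abs, abs_of_nonneg htnn]
      clear_value t
      clear htdef
      set W : Matrix (Fin n) (Fin n) ℂ :=
        fun i j => if i = i0 ∧ j = i0 then (t : ℂ) else 0 with hWdef
      have hWa : W.mulVec a = fun i => if i = i0 then (t : ℂ) * a i0 else 0 := by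
        funext i
        show ∑ j, (if i = i0 ∧ j = i0 then (t : ℂ) else 0) * a j = _
        by_cases hi : i = i0
        · simp only [hi, true_and, if_true]
          rw [Finset.sum_eq_single i0]
          · simp
          · intro b _ hb; simp [hb]
          · simp
        · simp only [hi, false_and, if_false, if_neg hi]
          simp
      have hcnWa : cnorm (W.mulVec a) ^ 2 = t ^ 2 * ‖a i0‖ ^ 2 := by
        rw [hWa, cnorm_sq]
        rw [Finset.sum_eq_single i0]
        · rw [if_pos rfl, norm_mul, htc]; ring
        · intro b _ hb; simp [hb]
        · simp
      have hfrobW : frobSq W = t ^ 2 := by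
        unfold frobSq
        rw [hWdef]
        rw [Finset.sum_eq_single i0]
        · rw [Finset.sum_eq_single i0]
          · simp [htc]
          · intro b _ hb; simp [hb]
          · simp
        · intro b _ hb
          refine Finset.sum_eq_zero fun j _ => ?_
          simp [hb]
        · simp
      have hconW : P₁ * cnorm (W.mulVec a) ^ 2 + frobSq W = 1 := by
        rw [hcnWa, hfrobW, ht2]
        field_simp
      have hnum0 : dotProduct (star rv) (H₂.mulVec (W.mulVec a)) = 0 := by
        rcases hdeg with h | h
        · -- γ₁ = 0 : a = 0
          have ha0 : cnorm a = 0 := by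
            have hle : P₁ * cnorm a ^ 2 ≤ γ₁ := by
              rw [hγ₁]
              exact le_csSup hG₁.bddAbove ⟨sv, cnorm_unitVec m hm, rfl⟩
            rw [h] at hle
            have hsq0 : cnorm a ^ 2 = 0 :=
              le_antisymm (by nlinarith) (sq_nonneg _)
            exact pow_eq_zero_iff two_ne_zero |>.mp hsq0
          have : a = 0 := cnorm_eq_zero ha0
          rw [this]
          simp [Matrix.mulVec_zero, dotProduct_zero]
        · -- γ₂ = 0 : H₂ᴴ rv = 0
          have hg0 : cnorm (H₂.conjTranspose.mulVec rv) = 0 := by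
            have hle : P₂ * cnorm (H₂.conjTranspose.mulVec rv) ^ 2 ≤ γ₂ := by
              rw [hγ₂]
              exact conjT_le hn H₂ P₂ hP₂ rv (cnorm_unitVec l hl)
            rw [h] at hle
            have hsq0 : cnorm (H₂.conjTranspose.mulVec rv) ^ 2 = 0 :=
              le_antisymm (by nlinarith) (sq_nonneg _)
            exact pow_eq_zero_iff two_ne_zero |>.mp hsq0
          have hgz : H₂.conjTranspose.mulVec rv = 0 := cnorm_eq_zero hg0
          rw [adjoint_dot, hgz]
          simp [zero_dotProduct]
      refine ⟨sv, rv, W, cnorm_unitVec m hm, cnorm_unitVec l hl, hconW, ?_⟩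
      rw [hnum0]
      simp
  · -- upper bound
    rintro x ⟨s, r, W, hs, hr, hcon, rfl⟩
    set a := H₁.mulVec s with hadef
    set g := H₂.conjTranspose.mulVec r with hgdef
    set u := W.mulVec a with hudef
    set v := W.conjTranspose.mulVec g with hvdef
    have hα : P₁ * cnorm a ^ 2 ≤ γ₁ := by
      rw [hγ₁]; exact le_csSup hG₁.bddAbove ⟨s, hs, rfl⟩
    have hβ : P₂ * cnorm g ^ 2 ≤ γ₂ := by
      rw [hγ₂]; exact conjT_le hn H₂ P₂ hP₂ r hr
    have hnum : dotProduct (star r) (H₂.mulVec (W.mulVec a)) =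
        dotProduct (star g) u := by rw [adjoint_dot]
    have hnum2 : dotProduct (star g) u = dotProduct (star v) a := by
      rw [adjoint_dot]
    have b1 : ‖dotProduct (star r) (H₂.mulVec (W.mulVec a))‖ ≤ cnorm g * cnorm u := by
      rw [hnum]; exact dot_cs g u
    have b2 : ‖dotProduct (star r) (H₂.mulVec (W.mulVec a))‖ ≤ cnorm v * cnorm a := by
      rw [hnum, hnum2]; exact dot_cs v a
    have hfrob : cnorm v ^ 2 ≤ frobSq W * cnorm g ^ 2 := by
      rw [hvdef, ← frob_conjT W]; exact mulVec_frob _ _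
    have hcore : P₁ * P₂ * ‖dotProduct (star r) (H₂.mulVec (W.mulVec a))‖ ^ 2 /
        (P₂ * cnorm v ^ 2 + 1) ≤
        (P₁ * cnorm a ^ 2) * (P₂ * cnorm g ^ 2) /
          (1 + P₁ * cnorm a ^ 2 + P₂ * cnorm g ^ 2) := by
      refine core_ineq (P₁ * cnorm a ^ 2) (P₂ * cnorm g ^ 2) (P₂ * cnorm v ^ 2)
        (P₁ * cnorm u ^ 2) _ (by positivity) (by positivity) (by positivity) (by positivity)
        ?_ (by positivity) ?_ ?_
      · -- y + β * xv ≤ β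
        have h1 : P₂ * cnorm v ^ 2 ≤ P₂ * (frobSq W * cnorm g ^ 2) :=
          mul_le_mul_of_nonneg_left hfrob hP₂.le
        nlinarith [sq_nonneg (cnorm g), sq_nonneg (cnorm u)]
      · -- N ≤ α * y
        have hb := pow_le_pow_left₀ (norm_nonneg _) b2 2
        nlinarith [hb, mul_pos hP₁ hP₂]
      · -- N ≤ β * xv
        have hb := pow_le_pow_left₀ (norm_nonneg _) b1 2
        nlinarith [hb, mul_pos hP₁ hP₂]
    exact hcore.trans (mono_ineq _ _ _ _ (by positivity) (by positivity) hα hβ)
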